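/- (Symplectic convex hull) Let N = 2m and V = {x ∈ ℝ^{2m} : x_1 + x_{2m} = x_2 + x_{2m-1} = ... = x_m + x_{m+1}}. Let S_{2m}^* = {σ ∈ S_{2m} : σ(2m+1-j) = 2m+1-σ(j) for all j}. For a dominant μ = (n_1,...,n_{2m}) ∈ V ∩ ℤ^{2m}, the convex hull of S_{2m}^*·μ equals Conv(S_{2m}·μ) ∩ V, and also equals {x ∈ V : c(x) = c(μ) and ν·x ≤ n_1 + ... + n_i for all 1 ≤ i ≤ m and all ν ∈ S_{2m}^*·ν_i}, where c(x) denotes the common value x_j + x_{2m+1-j}. -/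

import Mathlib

open Finset
namespace Stmt10

/-- Pairing equivalence: `(k, true) ↦ k`, `(k, false) ↦ rev k`. -/
def to2 (m : ℕ) : Fin m × Bool ≃ Fin (2*m) where
  toFun p := if p.2 then ⟨p.1, by have := p.1.isLt; omega⟩
             else Fin.rev ⟨p.1, by have := p.1.isLt; omega⟩
  invFun a := if h : (a : ℕ) < m then (⟨a, h⟩, true)
    else (⟨(a.rev : ℕ), by have := a.isLt; rw [Fin.val_rev]; omega⟩, false)
  left_inv := by
    rintro ⟨k, b⟩
    have hk := k.isLt
    cases b
    · simp only [if_neg Bool.false_ne_true]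
      rw [dif_neg]
      · rw [Prod.mk.injEq]
        refine ⟨?_, rfl⟩
        apply Fin.ext
        simp [Fin.rev_rev]
      · rw [Fin.val_rev]; simp; omega
    · simp
  right_inv := by
    intro a
    have ha := a.isLt
    by_cases h : (a : ℕ) < m
    · simp [h]
    · simp only [dif_neg h]
      simp only [if_neg Bool.false_ne_true]
      have : (⟨(a.rev : ℕ), by rw [Fin.val_rev]; omega⟩ : Fin (2*m)) = a.rev := rfl
      rw [this, Fin.rev_rev]

lemma to2_true {m : ℕ} (k : Fin m) (h : (k:ℕ) < 2*m) : to2 m (k, true) = ⟨(k:ℕ), h⟩ := rfl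

lemma to2_rev {m : ℕ} (k : Fin m) (b : Bool) : (to2 m (k, b)).rev = to2 m (k, !b) := by
  cases b
  · show (Fin.rev _).rev = _
    rw [Fin.rev_rev]; rfl
  · rfl

def bflip : Equiv.Perm Bool := Function.Involutive.toPerm Bool.not Bool.not_not

/-- a permutation in `S_{2m}^*` from a permutation of `Fin m` and signs. -/
def mkPerm (m : ℕ) (ρ : Equiv.Perm (Fin m)) (s : Fin m → Bool) : Equiv.Perm (Fin (2*m)) :=
  (to2 m).symm.trans ((Equiv.prodShear ρ (fun j => if s j then Equiv.refl Bool else bflip)).trans (to2 m))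

lemma mkPerm_apply {m : ℕ} (ρ : Equiv.Perm (Fin m)) (s : Fin m → Bool) (k : Fin m) (b : Bool) :
    mkPerm m ρ s (to2 m (k, b)) = to2 m (ρ k, if s k then b else !b) := by
  simp only [mkPerm, Equiv.trans_apply, Equiv.symm_apply_apply, Equiv.prodShear_apply]
  congr 1
  split <;> simp [bflip, Function.Involutive.coe_toPerm] <;> rfl

lemma mkPerm_rev {m : ℕ} (ρ : Equiv.Perm (Fin m)) (s : Fin m → Bool) (a : Fin (2*m)) :
    mkPerm m ρ s a.rev = (mkPerm m ρ s a).rev := by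
  obtain ⟨⟨k, b⟩, rfl⟩ := (to2 m).surjective a
  rw [to2_rev, mkPerm_apply, mkPerm_apply, to2_rev]
  congr 2
  split <;> simp



lemma range_filter_lt (N i : ℕ) (h : i ≤ N) :
    (Finset.range N).filter (fun n => n < i) = Finset.range i := by
  ext n; simp only [mem_filter, mem_range]; omega

lemma sum_filter_lt {N i : ℕ} (hi : i ≤ N) (g : Fin N → ℝ) (G : ℕ → ℝ)
    (hg : ∀ t : Fin N, (t:ℕ) < i → g t = G t) :
    ∑ t ∈ Finset.univ.filter (fun t : Fin N => (t:ℕ) < i), g t = ∑ n ∈ Finset.range i, G n := by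
  classical
  have h1 : ∑ t ∈ Finset.univ.filter (fun t : Fin N => (t:ℕ) < i), g t
      = ∑ t : Fin N, if (t:ℕ) < i then G (t:ℕ) else 0 := by
    rw [Finset.sum_filter]
    refine Finset.sum_congr rfl (fun t _ => ?_)
    split
    · rw [hg t ‹_›]
    · rfl
  rw [h1, Fin.sum_univ_eq_sum_range (fun n => if n < i then G n else 0) N,
    ← Finset.sum_filter, range_filter_lt N i hi]

lemma strictMono_fin_le {i : ℕ} (f : Fin i → ℕ) (hf : StrictMono f) : ∀ k : Fin i, (k:ℕ) ≤ f k := by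
  have key : ∀ n : ℕ, ∀ k : Fin i, (k:ℕ) = n → n ≤ f k := by
    intro n
    induction n with
    | zero => intro k _; omega
    | succ p ih =>
      intro k hk
      have hp : p < i := by have := k.isLt; omega
      have h1 := ih ⟨p, hp⟩ rfl
      have hlt : (⟨p, hp⟩ : Fin i) < k := by rw [Fin.lt_def]; simp; omega
      have := hf hlt
      omega
  exact fun k => key (k:ℕ) k rfl

/-- Sum of an antitone function over any `i`-element subset is at most the sum over first `i`. -/
lemma sum_subset_le {N : ℕ} (μ : Fin N → ℝ) (hdom : ∀ j k : Fin N, j ≤ k → μ k ≤ μ j)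
    {i : ℕ} (hi : i ≤ N) (S : Finset (Fin N)) (hS : S.card = i) :
    ∑ a ∈ S, μ a ≤ ∑ t ∈ Finset.univ.filter (fun t : Fin N => (t:ℕ) < i), μ t := by
  classical
  have e := S.orderIsoOfFin hS
  have hmono : StrictMono (fun k : Fin i => ((e k : Fin N) : ℕ)) := by
    intro a b hab
    exact Fin.lt_def.mp (e.strictMono hab)
  have hle : ∀ k : Fin i, (k:ℕ) ≤ ((e k : Fin N) : ℕ) := strictMono_fin_le _ hmono
  have h1 : ∑ a ∈ S, μ a = ∑ k : Fin i, μ (e k) := by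
    rw [← Finset.sum_attach S (fun a => μ a)]
    exact (Equiv.sum_comp (e.toEquiv.trans (Equiv.refl _)) (fun a => μ (a:Fin N))).symm
  have h2 : ∑ t ∈ Finset.univ.filter (fun t : Fin N => (t:ℕ) < i), μ t
      = ∑ k : Fin i, μ ⟨(k:ℕ), lt_of_lt_of_le k.isLt hi⟩ := by
    rw [sum_filter_lt hi μ (fun n => if h : n < N then μ ⟨n, h⟩ else 0)
      (fun t ht => by simp [t.isLt])]
    rw [← Fin.sum_univ_eq_sum_range (fun n => if h : n < N then μ ⟨n, h⟩ else 0) i]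
    refine Finset.sum_congr rfl (fun k _ => ?_)
    simp [lt_of_lt_of_le k.isLt hi]
  rw [h1, h2]
  refine Finset.sum_le_sum (fun k _ => ?_)
  refine hdom _ _ ?_
  rw [Fin.le_def]
  exact hle k

/-- Summation by parts inequality. -/
lemma abel_le {n : ℕ} (u v w : ℕ → ℝ)
    (hmono : ∀ k, k + 1 < n → u (k+1) ≤ u k)
    (hpos : ∀ k, k < n → 0 ≤ u k)
    (hpre : ∀ i, i ≤ n → ∑ k ∈ range i, v k ≤ ∑ k ∈ range i, w k) :
    ∑ k ∈ range n, u k * v k ≤ ∑ k ∈ range n, u k * w k := by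
  rcases Nat.eq_zero_or_pos n with h0 | h0
  · simp [h0]
  have key : 0 ≤ ∑ k ∈ range n, u k * (w k - v k) := by
    have hby := Finset.sum_range_by_parts u (fun k => w k - v k) n
    simp only [smul_eq_mul] at hby
    rw [hby]
    have hterm1 : 0 ≤ u (n-1) * ∑ i ∈ range n, (w i - v i) := by
      apply mul_nonneg (hpos _ (by omega))
      rw [Finset.sum_sub_distrib]
      linarith [hpre n le_rfl]
    have hterm2 : ∑ i ∈ range (n-1), (u (i+1) - u i) * ∑ j ∈ range (i+1), (w j - v j) ≤ 0 := by
      apply Finset.sum_nonpos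
      intro i hi
      rw [mem_range] at hi
      have h1 : u (i+1) - u i ≤ 0 := by linarith [hmono i (by omega)]
      have h2 : 0 ≤ ∑ j ∈ range (i+1), (w j - v j) := by
        rw [Finset.sum_sub_distrib]
        linarith [hpre (i+1) (by omega)]
      exact mul_nonpos_iff.2 (Or.inr ⟨h1, h2⟩)
    linarith
  have : ∑ k ∈ range n, u k * (w k - v k)
      = ∑ k ∈ range n, u k * w k - ∑ k ∈ range n, u k * v k := by
    rw [← Finset.sum_sub_distrib]
    exact Finset.sum_congr rfl (fun k _ => by ring)
  linarith [this ▸ key]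



lemma sum_pair (m : ℕ) (g : Fin (2*m) → ℝ) :
    ∑ a, g a = ∑ k : Fin m, (g (to2 m (k,true)) + g (to2 m (k,false))) := by
  rw [← Equiv.sum_comp (to2 m) g, Fintype.sum_prod_type]
  exact Finset.sum_congr rfl fun k _ => by rw [Fintype.sum_bool]

end Stmt10

open Stmt10 in
theorem stmt_10 (m : ℕ) (hm : 0 < m) (μ : Fin (2*m) → ℤ)
    (hdom : ∀ j k : Fin (2*m), j ≤ k → μ k ≤ μ j)
    (hμV : ∀ j k : Fin (2*m), μ j + μ j.rev = μ k + μ k.rev) :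
    convexHull ℝ {y : Fin (2*m) → ℝ | ∃ σ : Equiv.Perm (Fin (2*m)),
        (∀ j, σ j.rev = (σ j).rev) ∧ ∀ t, y t = (μ (σ t) : ℝ)}
      = convexHull ℝ {y : Fin (2*m) → ℝ | ∃ σ : Equiv.Perm (Fin (2*m)), ∀ t, y t = (μ (σ t) : ℝ)}
        ∩ {x : Fin (2*m) → ℝ | ∀ j k : Fin (2*m), x j + x j.rev = x k + x k.rev}
    ∧ convexHull ℝ {y : Fin (2*m) → ℝ | ∃ σ : Equiv.Perm (Fin (2*m)),
        (∀ j, σ j.rev = (σ j).rev) ∧ ∀ t, y t = (μ (σ t) : ℝ)}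
      = {x : Fin (2*m) → ℝ |
          (∀ j : Fin (2*m), x j + x j.rev
              = (μ (⟨0, by omega⟩ : Fin (2*m)) : ℝ) + (μ (Fin.rev ⟨0, by omega⟩) : ℝ)) ∧
          ∀ σ : Equiv.Perm (Fin (2*m)), (∀ j, σ j.rev = (σ j).rev) →
            ∀ i ≤ m, ∑ t ∈ Finset.univ.filter (fun t : Fin (2*m) => (t : ℕ) < i), x (σ t)
              ≤ ∑ t ∈ Finset.univ.filter (fun t : Fin (2*m) => (t : ℕ) < i), (μ t : ℝ)} := by
  classical
  set Ostar : Set (Fin (2*m) → ℝ) := {y | ∃ σ : Equiv.Perm (Fin (2*m)),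
      (∀ j, σ j.rev = (σ j).rev) ∧ ∀ t, y t = (μ (σ t) : ℝ)} with hOstar
  set O : Set (Fin (2*m) → ℝ) := {y | ∃ σ : Equiv.Perm (Fin (2*m)), ∀ t, y t = (μ (σ t) : ℝ)}
    with hO
  set V : Set (Fin (2*m) → ℝ) := {x | ∀ j k : Fin (2*m), x j + x j.rev = x k + x k.rev} with hV
  set C : Set (Fin (2*m) → ℝ) := {x : Fin (2*m) → ℝ |
      (∀ j : Fin (2*m), x j + x j.rev
          = (μ (⟨0, by omega⟩ : Fin (2*m)) : ℝ) + (μ (Fin.rev ⟨0, by omega⟩) : ℝ)) ∧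
      ∀ σ : Equiv.Perm (Fin (2*m)), (∀ j, σ j.rev = (σ j).rev) →
        ∀ i ≤ m, ∑ t ∈ Finset.univ.filter (fun t : Fin (2*m) => (t : ℕ) < i), x (σ t)
          ≤ ∑ t ∈ Finset.univ.filter (fun t : Fin (2*m) => (t : ℕ) < i), (μ t : ℝ)} with hC
  have hz2m : (0:ℕ) < 2*m := by omega
  set z0 : Fin (2*m) := ⟨0, hz2m⟩ with hz0
  set μr : Fin (2*m) → ℝ := fun j => (μ j : ℝ) with hμr
  have hμpair : ∀ a : Fin (2*m), μr a + μr a.rev = μr z0 + μr z0.rev := by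
    intro a; simp only [hμr]; exact_mod_cast hμV a z0
  have hdomr : ∀ j k : Fin (2*m), j ≤ k → μr k ≤ μr j := by
    intro j k h; simp only [hμr]; exact_mod_cast hdom j k h
  have hto2f : ∀ (w : Fin (2*m) → ℝ) (cst : ℝ), (∀ a, w a + w a.rev = cst) →
      ∀ k : Fin m, w (to2 m (k, false)) = cst - w (to2 m (k, true)) := by
    intro w cst hw k
    have h := to2_rev k true
    simp only [Bool.not_true] at h
    rw [← h]
    linarith [hw (to2 m (k, true))]
  have pairsum : ∀ (w : Fin (2*m) → ℝ) (cst : ℝ), (∀ a, w a + w a.rev = cst) →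
      ∑ j, w j = m * cst := by
    intro w cst hw
    rw [sum_pair m w]
    have hterm : ∀ k : Fin m, w (to2 m (k,true)) + w (to2 m (k,false)) = cst := by
      intro k
      rw [hto2f w cst hw k]
      ring
    rw [Finset.sum_congr rfl (fun k _ => hterm k), Finset.sum_const, Finset.card_univ,
      Fintype.card_fin, nsmul_eq_mul]
  have hAB : convexHull ℝ Ostar ⊆ convexHull ℝ O ∩ V := by
    have hVconv : Convex ℝ V := by
      intro p hp q hq a b ha hb hab
      intro j k
      have h1 := hp j k
      have h2 := hq j k
      simp only [Pi.add_apply, Pi.smul_apply, smul_eq_mul]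
      linear_combination a * h1 + b * h2
    apply convexHull_min ?_ (Convex.inter (convex_convexHull ℝ O) hVconv)
    rintro y ⟨σ, hσ, hy⟩
    refine ⟨subset_convexHull ℝ O ⟨σ, hy⟩, ?_⟩
    intro j k
    rw [hy j, hy k, hy j.rev, hy k.rev, hσ j, hσ k]
    exact_mod_cast hμV (σ j) (σ k)
  have hcard : ∀ i : ℕ, i ≤ 2*m →
      (Finset.univ.filter (fun t : Fin (2*m) => (t:ℕ) < i)).card = i := by
    intro i hi
    have himg : Finset.univ.filter (fun t : Fin (2*m) => (t:ℕ) < i)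
        = Finset.image (Fin.castLE hi) Finset.univ := by
      ext a
      simp only [Finset.mem_filter, Finset.mem_univ, true_and, Finset.mem_image]
      constructor
      · intro h
        exact ⟨⟨(a:ℕ), h⟩, Fin.ext rfl⟩
      · rintro ⟨b, rfl⟩
        exact b.isLt
    rw [himg, Finset.card_image_of_injective _ (Fin.castLE_injective hi), Finset.card_univ,
      Fintype.card_fin]
  have hBC : convexHull ℝ O ∩ V ⊆ C := by
    rintro x ⟨hxO, hxV⟩
    have hlin : IsLinearMap ℝ (fun z : Fin (2*m) → ℝ => ∑ j, z j) := by
      constructor <;> intros <;> simp [Finset.sum_add_distrib, Finset.mul_sum]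
    have hsum : ∑ j, x j = ∑ j, μr j := by
      have hsub : convexHull ℝ O ⊆ {z | ∑ j, z j = ∑ j, μr j} := by
        apply convexHull_min ?_ (convex_hyperplane hlin _)
        rintro y ⟨σ, hy⟩
        show ∑ j, y j = _
        calc ∑ j, y j = ∑ j, μr (σ j) := Finset.sum_congr rfl fun j _ => hy j
          _ = ∑ j, μr j := Equiv.sum_comp σ μr
      exact hsub hxO
    have hxpair : ∀ a : Fin (2*m), x a + x a.rev = x z0 + x z0.rev := fun a => hxV a z0
    have hxs := pairsum x _ hxpair
    have hμs := pairsum μr _ hμpair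
    have hcc : x z0 + x z0.rev = μr z0 + μr z0.rev := by
      have hm' : (0:ℝ) < (m:ℝ) := by exact_mod_cast hm
      rw [hxs, hμs] at hsum
      exact mul_left_cancel₀ (ne_of_gt hm') hsum
    constructor
    · intro j
      rw [hxpair j, hcc]
    · intro σ hσstar i hi
      have hlin2 : IsLinearMap ℝ (fun z : Fin (2*m) → ℝ =>
          ∑ t ∈ Finset.univ.filter (fun t : Fin (2*m) => (t : ℕ) < i), z (σ t)) := by
        constructor <;> intros <;> simp [Finset.sum_add_distrib, Finset.mul_sum]
      have hsub : convexHull ℝ O ⊆ {z | ∑ t ∈ Finset.univ.filter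
          (fun t : Fin (2*m) => (t : ℕ) < i), z (σ t)
          ≤ ∑ t ∈ Finset.univ.filter (fun t : Fin (2*m) => (t : ℕ) < i), μr t} := by
        apply convexHull_min ?_ (convex_halfSpace_le hlin2 _)
        rintro y ⟨τ, hy⟩
        show ∑ t ∈ _, y (σ t) ≤ _
        have hinj : Function.Injective (fun t => τ (σ t)) :=
          fun a b hab => σ.injective (τ.injective hab)
        have h1 : ∑ t ∈ Finset.univ.filter (fun t : Fin (2*m) => (t : ℕ) < i), y (σ t)
            = ∑ a ∈ (Finset.univ.filter (fun t : Fin (2*m) => (t : ℕ) < i)).image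
                (fun t => τ (σ t)), μr a := by
          rw [Finset.sum_image (fun a _ b _ h => hinj h)]
          exact Finset.sum_congr rfl fun t _ => hy (σ t)
        rw [h1]
        apply sum_subset_le μr hdomr (le_trans hi (by omega))
        rw [Finset.card_image_of_injective _ hinj]
        exact hcard i (le_trans hi (by omega))
      exact hsub hxO
  have hCA : C ⊆ convexHull ℝ Ostar := by
    rintro x ⟨hxc, hxineq⟩
    by_contra hnot
    have hfin : Ostar.Finite := by
      apply Set.Finite.subset (Set.finite_range
        (fun σ : Equiv.Perm (Fin (2*m)) => fun t => (μ (σ t) : ℝ)))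
      rintro y ⟨σ, _, hy⟩
      exact ⟨σ, (funext hy).symm⟩
    obtain ⟨f, u, hfu, hux⟩ := geometric_hahn_banach_closed_point
      (convex_convexHull ℝ Ostar) (hfin.isClosed_convexHull ℝ) hnot
    set ℓ : Fin (2*m) → ℝ := fun j => f (Pi.single j 1) with hℓ
    have hfrep : ∀ z : Fin (2*m) → ℝ, f z = ∑ j, z j * ℓ j := by
      intro z
      have hz : z = ∑ j, z j • (Pi.single j (1:ℝ) : Fin (2*m) → ℝ) := by
        funext t
        rw [Finset.sum_apply]
        simp [Pi.single_apply]
      conv_lhs => rw [hz]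
      rw [map_sum]
      exact Finset.sum_congr rfl fun j _ => by rw [map_smul]; simp [smul_eq_mul, hℓ]
    set c : ℝ := μr z0 + μr z0.rev with hcdef
    have hμp : ∀ a : Fin (2*m), μr a + μr a.rev = c := fun a => hμpair a
    have hxp : ∀ a : Fin (2*m), x a + x a.rev = c := hxc
    set d : Fin m → ℝ := fun k => ℓ (to2 m (k, true)) - ℓ (to2 m (k, false)) with hd
    set yy : Fin m → ℝ := fun k => x (to2 m (k, true)) - c/2 with hyy
    set bb : Fin m → ℝ := fun k => μr (to2 m (k, true)) - c/2 with hbb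
    have hrep : ∀ (w : Fin (2*m) → ℝ), (∀ a, w a + w a.rev = c) →
        f w = (∑ k : Fin m, d k * (w (to2 m (k, true)) - c/2)) + (c/2) * ∑ a, ℓ a := by
      intro w hw
      rw [hfrep w, sum_pair m (fun a => w a * ℓ a), sum_pair m ℓ, Finset.mul_sum,
        ← Finset.sum_add_distrib]
      refine Finset.sum_congr rfl fun k _ => ?_
      rw [hto2f w c hw k]
      simp only [hd]
      ring
    have hsort := Tuple.monotone_sort (fun k : Fin m => -|d k|)
    set π : Equiv.Perm (Fin m) := Tuple.sort (fun k : Fin m => -|d k|) with hπ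
    have hanti : ∀ a b : Fin m, a ≤ b → |d (π b)| ≤ |d (π a)| := by
      intro a b hab
      have h := hsort hab
      simp only [Function.comp_apply] at h
      linarith
    set s : Fin m → Bool := fun k => decide (0 ≤ d k) with hs
    set σ0 : Equiv.Perm (Fin (2*m)) := mkPerm m π⁻¹ s with hσ0
    have hσ0star : ∀ j, σ0 j.rev = (σ0 j).rev := mkPerm_rev _ _
    set yσ : Fin (2*m) → ℝ := fun t => μr (σ0 t) with hyσ
    have hyσO : yσ ∈ Ostar := ⟨σ0, hσ0star, fun t => rfl⟩
    have hyσpair : ∀ a, yσ a + yσ a.rev = c := by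
      intro a
      show μr (σ0 a) + yσ a.rev = c
      have : yσ a.rev = μr (σ0 a.rev) := rfl
      rw [this, hσ0star a]
      exact hμp (σ0 a)
    have hval : ∀ k : Fin m, yσ (to2 m (k, true)) - c/2
        = (if s k then bb (π⁻¹ k) else -(bb (π⁻¹ k))) := by
      intro k
      show μr (σ0 (to2 m (k,true))) - c/2 = _
      rw [hσ0, mkPerm_apply]
      by_cases hsk : s k
      · simp only [hsk, if_true, hbb]
      · have hsk' : s k = false := by simpa using hsk
        simp only [hsk', Bool.false_eq_true, if_false, Bool.not_true]
        rw [hto2f μr c hμp (π⁻¹ k)]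
        simp only [hbb]
        ring
    have hfyσ : f yσ = (∑ k : Fin m, |d k| * bb (π⁻¹ k)) + (c/2) * ∑ a, ℓ a := by
      rw [hrep yσ hyσpair]
      congr 1
      refine Finset.sum_congr rfl fun k _ => ?_
      rw [hval k]
      by_cases hsk : s k
      · rw [if_pos hsk]
        have h0 : 0 ≤ d k := of_decide_eq_true hsk
        rw [abs_of_nonneg h0]
      · rw [if_neg hsk]
        have h0 : ¬ (0 ≤ d k) := by
          intro h
          exact hsk (decide_eq_true h)
        rw [abs_of_neg (lt_of_not_ge h0)]
        ring
    have hfx : f x = (∑ k : Fin m, d k * yy k) + (c/2) * ∑ a, ℓ a := by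
      rw [hrep x hxp]
    have hkey : ∑ k : Fin m, d k * yy k ≤ ∑ k : Fin m, |d k| * bb (π⁻¹ k) := by
      have hR : ∑ k : Fin m, |d k| * bb (π⁻¹ k) = ∑ k : Fin m, |d (π k)| * bb k := by
        rw [← Equiv.sum_comp π (fun k => |d k| * bb (π⁻¹ k))]
        simp
      have hL : ∑ k : Fin m, d k * yy k = ∑ k : Fin m, d (π k) * yy (π k) :=
        (Equiv.sum_comp π (fun k => d k * yy k)).symm
      rw [hR, hL]
      have step1 : ∑ k : Fin m, d (π k) * yy (π k) ≤ ∑ k : Fin m, |d (π k)| * |yy (π k)| := by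
        apply Finset.sum_le_sum
        intro k _
        calc d (π k) * yy (π k) ≤ |d (π k) * yy (π k)| := le_abs_self _
          _ = |d (π k)| * |yy (π k)| := abs_mul _ _
      refine le_trans step1 ?_
      set U : ℕ → ℝ := fun n => if h : n < m then |d (π ⟨n, h⟩)| else 0 with hU
      set Vv : ℕ → ℝ := fun n => if h : n < m then |yy (π ⟨n, h⟩)| else 0 with hVv
      set W : ℕ → ℝ := fun n => if h : n < m then bb ⟨n, h⟩ else 0 with hW
      have hUV : ∑ k : Fin m, |d (π k)| * |yy (π k)| = ∑ n ∈ range m, U n * Vv n := by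
        rw [← Fin.sum_univ_eq_sum_range (fun n => U n * Vv n) m]
        refine Finset.sum_congr rfl fun k _ => ?_
        simp [hU, hVv, k.isLt]
      have hUW : ∑ k : Fin m, |d (π k)| * bb k = ∑ n ∈ range m, U n * W n := by
        rw [← Fin.sum_univ_eq_sum_range (fun n => U n * W n) m]
        refine Finset.sum_congr rfl fun k _ => ?_
        simp [hU, hW, k.isLt]
      rw [hUV, hUW]
      apply abel_le
      · intro k hk
        have hk1 : k + 1 < m := hk
        have hk0 : k < m := by omega
        simp only [hU, dif_pos hk1, dif_pos hk0]
        exact hanti ⟨k, hk0⟩ ⟨k+1, hk1⟩ (by simp [Fin.le_def])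
      · intro k hk
        simp only [hU, dif_pos hk]
        exact abs_nonneg _
      · intro i hi
        set s' : Fin m → Bool := fun k => decide (0 ≤ yy (π k)) with hs'
        have hin := hxineq (mkPerm m π s') (mkPerm_rev _ _) i hi
        have hi2 : i ≤ 2*m := by omega
        have hgen : ∀ k : Fin m, x (mkPerm m π s' (to2 m (k, true))) = c/2 + |yy (π k)| := by
          intro k
          rw [mkPerm_apply]
          by_cases hsk : s' k
          · rw [if_pos hsk]
            have h0 : 0 ≤ yy (π k) := of_decide_eq_true hsk
            rw [abs_of_nonneg h0]
            simp only [hyy]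
            ring
          · rw [if_neg hsk]
            have h0 : ¬ (0 ≤ yy (π k)) := fun h => hsk (decide_eq_true h)
            rw [abs_of_neg (lt_of_not_ge h0)]
            simp only [Bool.not_true]
            rw [hto2f x c hxp (π k)]
            simp only [hyy]
            ring
        rw [sum_filter_lt hi2 _ (fun n => c/2 + Vv n) ?_] at hin
        rotate_left
        · intro t ht
          have htm : (t:ℕ) < m := lt_of_lt_of_le ht hi
          have hteq : to2 m (⟨(t:ℕ), htm⟩, true) = t := rfl
          have h2 : Vv (t:ℕ) = |yy (π ⟨(t:ℕ), htm⟩)| := by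
            simp only [hVv, dif_pos htm]
          show x (mkPerm m π s' t) = c/2 + Vv (t:ℕ)
          calc x (mkPerm m π s' t) = x (mkPerm m π s' (to2 m (⟨(t:ℕ), htm⟩, true))) := by
                rw [hteq]
            _ = c/2 + |yy (π ⟨(t:ℕ), htm⟩)| := hgen _
            _ = c/2 + Vv (t:ℕ) := by rw [h2]
        rw [sum_filter_lt hi2 _ (fun n => c/2 + W n) ?_] at hin
        rotate_left
        · intro t ht
          have htm : (t:ℕ) < m := lt_of_lt_of_le ht hi
          have hteq : to2 m (⟨(t:ℕ), htm⟩, true) = t := rfl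
          have h2 : W (t:ℕ) = bb ⟨(t:ℕ), htm⟩ := by
            simp only [hW, dif_pos htm]
          show (μ t : ℝ) = c/2 + W (t:ℕ)
          have h3 : (μ t : ℝ) = μr (to2 m (⟨(t:ℕ), htm⟩, true)) := by rw [hteq]
          rw [h3, h2]
          simp only [hbb]
          ring
        have e1 : ∑ n ∈ range i, (c/2 + Vv n) = i*(c/2) + ∑ n ∈ range i, Vv n := by
          rw [Finset.sum_add_distrib, Finset.sum_const, card_range, nsmul_eq_mul]
        have e2 : ∑ n ∈ range i, (c/2 + W n) = i*(c/2) + ∑ n ∈ range i, W n := by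
          rw [Finset.sum_add_distrib, Finset.sum_const, card_range, nsmul_eq_mul]
        rw [e1, e2] at hin
        linarith
    have hle : f x ≤ f yσ := by
      rw [hfx, hfyσ]
      linarith
    have h2 := hfu yσ (subset_convexHull ℝ Ostar hyσO)
    linarith
  constructor
  · exact Set.Subset.antisymm hAB (fun x hx => hCA (hBC hx))
  · exact Set.Subset.antisymm (fun x hx => hBC (hAB hx)) hCA
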